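/- For n ≥ 4, the minimum nonzero weight of a Steinhaus triangle of size n is n, and it is attained exactly by the three sequences: the all-ones sequence, the sequence (1,0,…,0), and the sequence (0,…,0,1). -/

import Mathlib

/-- The derivative of a binary sequence: `(∂x)ᵢ = xᵢ + xᵢ₊₁`. -/
def der {n : ℕ} (x : Fin n → ZMod 2) : Fin (n - 1) → ZMod 2 :=
  fun i => x ⟨i.1, by have := i.2; omega⟩ + x ⟨i.1 + 1, by have := i.2; omega⟩

/-- The iterated derivative `∂ʲx : F₂^{n-j}`. -/
def derIter {n : ℕ} (x : Fin n → ZMod 2) : (j : ℕ) → Fin (n - j) → ZMod 2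
  | 0 => x
  | j + 1 => der (derIter x j)

/-- The weight (number of ones) of a binary sequence. -/
def wt {m : ℕ} (y : Fin m → ZMod 2) : ℕ :=
  (Finset.univ.filter fun i => y i = 1).card

/-- The weight of the Steinhaus triangle of `x`: the sum of the weights of all rows. -/
def tw {n : ℕ} (x : Fin n → ZMod 2) : ℕ :=
  ∑ j ∈ Finset.range n, wt (derIter x j)

/-- The standard basis vector `e k` with a single one in position `k`. -/
def e (n k : ℕ) : Fin n → ZMod 2 := fun i => if i.1 = k then 1 else 0


-- basic ZMod 2 facts
lemma z2 (a : ZMod 2) : a = 0 ∨ a = 1 := by revert a; decide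
lemma z2add (a b : ZMod 2) (h : a + b = 0) : b = a := by revert a b; decide
lemma z2self (a : ZMod 2) : a + a = 0 := by revert a; decide

lemma wt_eq_zero_iff {m : ℕ} (y : Fin m → ZMod 2) : wt y = 0 ↔ y = 0 := by
  unfold wt
  rw [Finset.card_eq_zero, Finset.filter_eq_empty_iff, funext_iff]
  constructor
  · intro h i
    rcases z2 (y i) with h0 | h1
    · exact h0
    · exact absurd h1 (h (Finset.mem_univ i))
  · intro h i _
    simp [h i]

lemma wt_pos {m : ℕ} (y : Fin m → ZMod 2) (h : y ≠ 0) : 1 ≤ wt y := by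
  rcases Nat.eq_zero_or_pos (wt y) with h0 | h1
  · exact absurd ((wt_eq_zero_iff y).mp h0) h
  · exact h1

lemma wt_ones {m : ℕ} (y : Fin m → ZMod 2) (h : ∀ i, y i = 1) : wt y = m := by
  unfold wt
  rw [Finset.filter_true_of_mem (fun i _ => h i), Finset.card_univ, Fintype.card_fin]

lemma wt_e {m k : ℕ} (hk : k < m) : wt (e m k) = 1 := by
  unfold wt
  rw [Finset.card_eq_one]
  refine ⟨⟨k, hk⟩, ?_⟩
  ext i
  simp only [Finset.mem_filter, Finset.mem_univ, true_and, Finset.mem_singleton, Fin.ext_iff]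
  simp only [e]
  constructor
  · intro h
    by_contra hne
    rw [if_neg hne] at h
    exact absurd h (by decide)
  · intro h; rw [if_pos h]

lemma wt_one_exists {m : ℕ} (y : Fin m → ZMod 2) (h : wt y = 1) :
    ∃ k, ∃ _ : k < m, y = e m k := by
  unfold wt at h
  rw [Finset.card_eq_one] at h
  obtain ⟨a, ha⟩ := h
  refine ⟨a.1, a.2, funext fun i => ?_⟩
  have hmem : ∀ i : Fin m, y i = 1 ↔ i = a := by
    intro i
    have h2 : i ∈ Finset.filter (fun i => y i = 1) Finset.univ ↔ i ∈ ({a} : Finset (Fin m)) := by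
      rw [ha]
    simpa using h2
  by_cases hi : i = a
  · rw [(hmem i).mpr hi, e, if_pos (by rw [hi])]
  · have h1 : y i ≠ 1 := fun hy => hi ((hmem i).mp hy)
    rcases z2 (y i) with h0 | h1'
    · rw [h0, e, if_neg (fun hc : i.1 = a.1 => hi (Fin.ext hc))]
    · exact absurd h1' h1

lemma derIter_succ {n : ℕ} (x : Fin n → ZMod 2) (j : ℕ) :
    derIter x (j + 1) = der (derIter x j) := rfl

lemma der_of_const {m : ℕ} (y : Fin m → ZMod 2) (h : ∀ i j, y i = y j) :
    der y = 0 := by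
  funext i
  show y _ + y _ = 0
  rw [h ⟨i.1, by have := i.2; omega⟩ ⟨i.1 + 1, by have := i.2; omega⟩]
  exact z2self _

lemma der_zero {m : ℕ} : der (0 : Fin m → ZMod 2) = 0 :=
  der_of_const 0 (fun _ _ => rfl)

lemma const_of_der_zero {m : ℕ} (y : Fin m → ZMod 2) (h : der y = 0) :
    ∀ i j : Fin m, y i = y j := by
  have key : ∀ k (hk : k < m), y ⟨k, hk⟩ = y ⟨0, by omega⟩ := by
    intro k
    induction k with
    | zero => intro hk; rfl
    | succ k ih =>
      intro hk
      have hd : der y ⟨k, by omega⟩ = 0 := by rw [h]; rfl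
      have : y ⟨k, by omega⟩ + y ⟨k + 1, by omega⟩ = 0 := hd
      have h2 := z2add _ _ this
      rw [h2]
      exact ih (by omega)
  intro i j
  rw [← Fin.eta i i.2, ← Fin.eta j j.2, key i.1 i.2, key j.1 j.2]

lemma derIter_zero_of_le {n : ℕ} (x : Fin n → ZMod 2) {i j : ℕ} (hij : i ≤ j)
    (h : derIter x i = 0) : derIter x j = 0 := by
  induction j with
  | zero => rwa [Nat.le_zero.mp hij] at h
  | succ j ih =>
    rcases Nat.eq_or_lt_of_le hij with h1 | h1
    · rwa [h1] at h
    · rw [derIter_succ, ih (by omega)]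
      exact der_zero

lemma derIter_n {n : ℕ} (x : Fin n → ZMod 2) : derIter x n = 0 := by
  funext i
  exact absurd i.2 (by omega)

lemma tw_zero {n : ℕ} : tw (0 : Fin n → ZMod 2) = 0 := by
  unfold tw
  refine Finset.sum_eq_zero fun j _ => ?_
  rw [(wt_eq_zero_iff _).mpr]
  exact derIter_zero_of_le 0 (Nat.zero_le j) rfl

lemma tw_ones {n : ℕ} (hn : 1 ≤ n) : tw (fun _ => 1 : Fin n → ZMod 2) = n := by
  obtain ⟨m, rfl⟩ : ∃ m, n = m + 1 := ⟨n - 1, by omega⟩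
  unfold tw
  rw [Finset.sum_range_succ']
  have h0 : wt (derIter (fun _ => 1 : Fin (m+1) → ZMod 2) 0) = m + 1 :=
    wt_ones _ (fun _ => rfl)
  have h1 : ∀ j, 1 ≤ j → derIter (fun _ => 1 : Fin (m+1) → ZMod 2) j = 0 := by
    intro j hj
    refine derIter_zero_of_le _ hj ?_
    exact der_of_const _ (fun _ _ => rfl)
  have h2 : ∀ i ∈ Finset.range m, wt (derIter (fun _ => 1 : Fin (m+1) → ZMod 2) (i+1)) = 0 := by
    intro i _
    rw [(wt_eq_zero_iff _).mpr (h1 (i+1) (by omega))]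
  rw [Finset.sum_congr rfl h2, Finset.sum_const, h0]
  simp

lemma der_e_apply {m k : ℕ} (i : Fin (m - 1)) :
    der (e m k) i = (if i.1 = k then (1 : ZMod 2) else 0) + (if i.1 + 1 = k then 1 else 0) := rfl

lemma der_e_zero {m : ℕ} (hm : 2 ≤ m) : der (e m 0) = e (m - 1) 0 := by
  funext i
  rw [der_e_apply, e]
  by_cases h : i.1 = 0
  · rw [if_pos h, if_neg (by omega : ¬ i.1 + 1 = 0)]; decide
  · rw [if_neg h, if_neg (by omega : ¬ i.1 + 1 = 0)]; decide

lemma der_e_last {m : ℕ} (hm : 2 ≤ m) : der (e m (m - 1)) = e (m - 1) (m - 2) := by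
  funext i
  rw [der_e_apply, e]
  have hi := i.2
  by_cases h : i.1 = m - 2
  · rw [if_neg (show ¬ i.1 = m - 1 by omega), if_pos (show i.1 + 1 = m - 1 by omega), if_pos h]; decide
  · rw [if_neg (show ¬ i.1 = m - 1 by omega), if_neg (show ¬ i.1 + 1 = m - 1 by omega), if_neg h]; decide

lemma derIter_e0 {n : ℕ} (j : ℕ) (hj : j < n) : derIter (e n 0) j = e (n - j) 0 := by
  induction j with
  | zero => rfl
  | succ j ih =>
    rw [derIter_succ, ih (by omega), der_e_zero (by omega)]
    rfl

lemma tw_e0 {n : ℕ} (hn : 1 ≤ n) : tw (e n 0) = n := by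
  unfold tw
  have h : ∀ j ∈ Finset.range n, wt (derIter (e n 0) j) = 1 := by
    intro j hj
    rw [Finset.mem_range] at hj
    rw [derIter_e0 j hj]
    exact wt_e (by omega)
  rw [Finset.sum_congr rfl h, Finset.sum_const, Finset.card_range]
  simp

lemma derIter_elast {n : ℕ} (j : ℕ) (hj : j < n) :
    derIter (e n (n - 1)) j = e (n - j) (n - j - 1) := by
  induction j with
  | zero => rfl
  | succ j ih =>
    rw [derIter_succ, ih (by omega)]
    exact der_e_last (m := n - j) (by omega)

lemma tw_elast {n : ℕ} (hn : 1 ≤ n) : tw (e n (n - 1)) = n := by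
  unfold tw
  have h : ∀ j ∈ Finset.range n, wt (derIter (e n (n - 1)) j) = 1 := by
    intro j hj
    rw [Finset.mem_range] at hj
    rw [derIter_elast j hj]
    exact wt_e (by omega)
  rw [Finset.sum_congr rfl h, Finset.sum_const, Finset.card_range]
  simp

lemma ifadd {a b k : ℕ} (hab : a ≠ b)
    (h : (if a = k then (1 : ZMod 2) else 0) + (if b = k then 1 else 0) = 1) :
    a = k ∨ b = k := by
  split_ifs at h with h1 h2 h2
  · exact Or.inl h1
  · exact Or.inl h1
  · exact Or.inr h2
  · exact absurd h (by decide)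

lemma two_le_wt_der_e {m k : ℕ} (h0 : 0 < k) (h1 : k < m - 1) :
    2 ≤ wt (der (e m k)) := by
  have ha : k - 1 < m - 1 := by omega
  have hb : k < m - 1 := h1
  have hab : (⟨k - 1, ha⟩ : Fin (m - 1)) ≠ ⟨k, hb⟩ := by
    rw [Fin.ne_iff_vne]
    simp only [Fin.val_mk]
    omega
  have hda : der (e m k) ⟨k - 1, ha⟩ = 1 := by
    rw [der_e_apply]
    simp only [Fin.val_mk]
    rw [if_neg (show ¬ k - 1 = k by omega), if_pos (show k - 1 + 1 = k by omega)]
    decide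
  have hdb : der (e m k) ⟨k, hb⟩ = 1 := by
    rw [der_e_apply]
    simp only [Fin.val_mk]
    rw [if_neg (show ¬ k + 1 = k by omega)]
    decide
  have hsub : ({⟨k - 1, ha⟩, ⟨k, hb⟩} : Finset (Fin (m - 1))) ⊆
      Finset.univ.filter fun i => der (e m k) i = 1 := by
    intro i hi
    rcases Finset.mem_insert.mp hi with rfl | hi
    · simp [hda]
    · rw [Finset.mem_singleton] at hi
      subst hi
      simp [hdb]
  calc 2 = ({⟨k - 1, ha⟩, ⟨k, hb⟩} : Finset (Fin (m - 1))).card := (Finset.card_pair hab).symm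
  _ ≤ _ := Finset.card_le_card hsub

lemma B1 {m : ℕ} (y : Fin m → ZMod 2) (h1 : wt y = 1) (h2 : ∀ i, der y i = 1) : m ≤ 3 := by
  by_contra hm
  push_neg at hm
  obtain ⟨k, hk, rfl⟩ := wt_one_exists y h1
  have e0 := h2 ⟨0, by omega⟩
  have e1 := h2 ⟨1, by omega⟩
  have e2 := h2 ⟨2, by omega⟩
  rw [der_e_apply] at e0 e1 e2
  have c0 := ifadd (by omega) e0
  have c1 := ifadd (by omega) e1
  have c2 := ifadd (by omega) e2
  simp only at c0 c1 c2
  omega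

lemma B2 {m : ℕ} (y : Fin m → ZMod 2) (hm : m = 3) (h1 : wt y = 1)
    (h2 : ∀ i, der y i = 1) : y = e m 1 := by
  subst hm
  obtain ⟨k, hk, rfl⟩ := wt_one_exists y h1
  interval_cases k
  · exact absurd h2 (by decide)
  · rfl
  · exact absurd h2 (by decide)

lemma B3 {m : ℕ} (y : Fin m → ZMod 2) (hm : m = 4) (h1 : wt y = 1)
    (h2 : der y = e (m - 1) 1) : False := by
  subst hm
  obtain ⟨k, hk, rfl⟩ := wt_one_exists y h1
  interval_cases k <;> exact absurd h2 (by decide)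

lemma sum_all_one {s : Finset ℕ} {f : ℕ → ℕ} (hpos : ∀ j ∈ s, 1 ≤ f j)
    (h : ∑ j ∈ s, f j = s.card) : ∀ j ∈ s, f j = 1 := by
  have h1 : ∑ j ∈ s, (f j - 1 + 1) = s.card := by
    rw [Finset.sum_congr rfl fun j hj => Nat.sub_add_cancel (hpos j hj)]
    exact h
  rw [Finset.sum_add_distrib, Finset.sum_const, smul_eq_mul, mul_one] at h1
  have h2 : ∑ j ∈ s, (f j - 1) = 0 := by omega
  intro j hj
  have := (Finset.sum_eq_zero_iff.mp h2) j hj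
  have := hpos j hj
  omega


lemma main {n : ℕ} (hn : 4 ≤ n) (x : Fin n → ZMod 2) (hx : x ≠ 0) :
    n ≤ tw x ∧ (tw x = n → x = (fun _ => 1) ∨ x = e n 0 ∨ x = e n (n - 1)) := by
  classical
  have hex : ∃ j, derIter x j = 0 := ⟨n, derIter_n x⟩
  obtain ⟨J, hJ0, hJmin⟩ : ∃ J, derIter x J = 0 ∧ ∀ j < J, derIter x j ≠ 0 :=
    ⟨Nat.find hex, Nat.find_spec hex, fun j hj => Nat.find_min hex hj⟩
  have hJn : J ≤ n := by
    by_contra h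
    exact hJmin n (by omega) (derIter_n x)
  have hJpos : 1 ≤ J := by
    rcases Nat.eq_zero_or_pos J with h | h
    · subst h
      exact absurd hJ0 hx
    · exact h
  have hpos : ∀ j < J, 1 ≤ wt (derIter x j) := fun j hj => wt_pos _ (hJmin j hj)
  rcases Nat.eq_or_lt_of_le hJn with hJeq | hJlt
  · -- Case J = n : all rows nonzero
    subst hJeq
    have hlb : J ≤ tw x := by
      unfold tw
      calc J = ∑ _j ∈ Finset.range J, 1 := by simp
        _ ≤ _ := Finset.sum_le_sum (fun j hj => hpos j (Finset.mem_range.mp hj))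
    refine ⟨hlb, fun heq => ?_⟩
    have hall : ∀ j ∈ Finset.range J, wt (derIter x j) = 1 := by
      refine sum_all_one (fun j hj => hpos j (Finset.mem_range.mp hj)) ?_
      rw [Finset.card_range]
      exact heq
    have h0 : wt (derIter x 0) = 1 := hall 0 (Finset.mem_range.mpr (by omega))
    obtain ⟨k, hk, hxk⟩ := wt_one_exists _ h0
    have h1 : wt (derIter x 1) = 1 := hall 1 (Finset.mem_range.mpr (by omega))
    rcases Nat.eq_zero_or_pos k with hk0 | hk0
    · subst hk0
      exact Or.inr (Or.inl hxk)
    rcases Nat.eq_or_lt_of_le (show k ≤ J - 1 by omega) with hkl | hkl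
    · subst hkl
      exact Or.inr (Or.inr hxk)
    · exfalso
      have h2 : 2 ≤ wt (derIter x 1) := by
        have heq1 : derIter x 1 = der (e J k) := by
          rw [derIter_succ]
          exact congrArg der hxk
        rw [heq1]
        exact two_le_wt_der_e hk0 hkl
      omega
  · -- Case J < n
    obtain ⟨K, rfl⟩ : ∃ K, J = K + 1 := ⟨J - 1, by omega⟩
    have hderK : der (derIter x K) = 0 := hJ0
    have hconst := const_of_der_zero _ hderK
    have hneK : derIter x K ≠ 0 := hJmin K (by omega)
    obtain ⟨i0, hi0⟩ : ∃ i, derIter x K i ≠ 0 := Function.ne_iff.mp hneK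
    have hi01 : derIter x K i0 = 1 := by
      rcases z2 (derIter x K i0) with h | h
      · exact absurd h hi0
      · exact h
    have hallone : ∀ i, derIter x K i = 1 := fun i => by rw [hconst i i0, hi01]
    have hwK : wt (derIter x K) = n - K := wt_ones _ hallone
    have htail : ∀ j ∈ Finset.Ico (K + 1) n, wt (derIter x j) = 0 := by
      intro j hj
      rw [(wt_eq_zero_iff _).mpr (derIter_zero_of_le x (Finset.mem_Ico.mp hj).1 hJ0)]
    have hsplit : tw x = (∑ j ∈ Finset.range K, wt (derIter x j)) + (n - K) := by
      unfold tw
      rw [Finset.range_eq_Ico,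
        ← Finset.sum_Ico_consecutive _ (Nat.zero_le (K + 1)) (by omega : K + 1 ≤ n),
        Finset.sum_eq_zero htail, add_zero, ← Finset.range_eq_Ico, Finset.sum_range_succ, hwK]
    have hlb : n ≤ tw x := by
      rw [hsplit]
      have hsK : K ≤ ∑ j ∈ Finset.range K, wt (derIter x j) := by
        calc K = ∑ _j ∈ Finset.range K, 1 := by simp
          _ ≤ _ := Finset.sum_le_sum
              (fun j hj => hpos j (by have := Finset.mem_range.mp hj; omega))
      omega
    refine ⟨hlb, fun heq => ?_⟩
    have hsumK : ∑ j ∈ Finset.range K, wt (derIter x j) = K := by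
      rw [hsplit] at heq
      omega
    have hall : ∀ j ∈ Finset.range K, wt (derIter x j) = 1 := by
      refine sum_all_one (fun j hj => hpos j (by have := Finset.mem_range.mp hj; omega)) ?_
      rw [Finset.card_range]
      exact hsumK
    rcases Nat.eq_zero_or_pos K with hK0 | hK0
    · subst hK0
      left
      funext i
      exact hallone i
    · exfalso
      obtain ⟨K', rfl⟩ : ∃ K', K = K' + 1 := ⟨K - 1, by omega⟩
      have hwK' : wt (derIter x K') = 1 := hall K' (Finset.mem_range.mpr (by omega))
      have hderK' : ∀ i, der (derIter x K') i = 1 := hallone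
      have hm3 : n - K' ≤ 3 := B1 _ hwK' hderK'
      have hnK' : n = K' + 3 := by omega
      have hK'pos : 1 ≤ K' := by omega
      obtain ⟨K'', rfl⟩ : ∃ K'', K' = K'' + 1 := ⟨K' - 1, by omega⟩
      have hrowK' : derIter x (K'' + 1) = e (n - (K'' + 1)) 1 :=
        B2 _ (by omega) hwK' hderK'
      have hwK'' : wt (derIter x K'') = 1 := hall K'' (Finset.mem_range.mpr (by omega))
      exact B3 (derIter x K'') (by omega) hwK'' hrowK'


theorem stmt7 (n : ℕ) (hn : 4 ≤ n) :
    (∀ x : Fin n → ZMod 2, x ≠ 0 → n ≤ tw x) ∧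
    (∀ x : Fin n → ZMod 2,
      tw x = n ↔ x = (fun _ => 1) ∨ x = e n 0 ∨ x = e n (n - 1)) := by
  constructor
  · intro x hx
    exact (main hn x hx).1
  · intro x
    constructor
    · intro h
      by_cases hx : x = 0
      · subst hx
        rw [tw_zero] at h
        omega
      · exact (main hn x hx).2 h
    · rintro (rfl | rfl | rfl)
      · exact tw_ones (by omega)
      · exact tw_e0 (by omega)
      · exact tw_elast (by omega)
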